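/- Define y : ℝ → ℝ by y(t) = tan(t)·tanh(t). Then for every t ∈ ℝ with cos(t) ≠ 0, writing y'(t) for the derivative of y at t and y''(t) for the derivative of y' at t, the following identity holds: y(t)^6 − y(t)^4·y''(t) + y(t)^4 + 2·y(t)^3·y'(t)^2 + (1/4)·(y(t)^2 − 1)·y''(t)^2 − y(t)^2 − y(t)·y'(t)^2·y''(t) − 2·y(t)·y'(t)^2 + y'(t)^4 + y''(t) − 1 = 0. -/

import Mathlib

open Real Filter Topology

lemma tanh_hasDerivAt' (x : ℝ) : HasDerivAt Real.tanh (1 - Real.tanh x ^ 2) x := by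
  have hc : Real.cosh x ≠ 0 := (Real.cosh_pos x).ne'
  have h := (Real.hasDerivAt_sinh x).div (Real.hasDerivAt_cosh x) hc
  have heq : Real.tanh = fun x => Real.sinh x / Real.cosh x := by
    funext x; exact Real.tanh_eq_sinh_div_cosh x
  rw [heq]
  refine h.congr_deriv (Eq.symm ?_)
  simp only
  field_simp

lemma tan_hasDerivAt' {x : ℝ} (h : Real.cos x ≠ 0) :
    HasDerivAt Real.tan (1 + Real.tan x ^ 2) x := by
  convert Real.hasDerivAt_tan h using 1
  rw [Real.tan_eq_sin_div_cos]
  field_simp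
  exact Real.cos_sq_add_sin_sq x

theorem stmt12 (y : ℝ → ℝ) (hy : y = fun t => Real.tan t * Real.tanh t) :
    ∀ t : ℝ, Real.cos t ≠ 0 →
      y t ^ 6 - y t ^ 4 * deriv (deriv y) t + y t ^ 4 + 2 * y t ^ 3 * deriv y t ^ 2 +
          (1 / 4 : ℝ) * (y t ^ 2 - 1) * deriv (deriv y) t ^ 2 - y t ^ 2 -
          y t * deriv y t ^ 2 * deriv (deriv y) t - 2 * y t * deriv y t ^ 2 +
          deriv y t ^ 4 + deriv (deriv y) t - 1 = 0 := by
  intro t ht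
  set g : ℝ → ℝ := fun s =>
    (1 + Real.tan s ^ 2) * Real.tanh s + Real.tan s * (1 - Real.tanh s ^ 2) with hg_def
  have hder : ∀ s : ℝ, Real.cos s ≠ 0 → HasDerivAt y (g s) s := by
    intro s hs
    rw [hy]
    exact (tan_hasDerivAt' hs).mul (tanh_hasDerivAt' s)
  have h1 : deriv y t = g t := (hder t ht).deriv
  have hopen : ∀ᶠ s in 𝓝 t, Real.cos s ≠ 0 :=
    (Real.continuous_cos.continuousAt).eventually_ne ht
  have heq : deriv y =ᶠ[𝓝 t] g := hopen.mono fun s hs => (hder s hs).deriv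
  have h2 : deriv (deriv y) t = deriv g t := heq.deriv_eq
  have hg : HasDerivAt g
      (2 * Real.tan t * (1 + Real.tan t ^ 2) * Real.tanh t
        + 2 * (1 + Real.tan t ^ 2) * (1 - Real.tanh t ^ 2)
        - 2 * Real.tan t * Real.tanh t * (1 - Real.tanh t ^ 2)) t := by
    have hT := tan_hasDerivAt' ht
    have hH := tanh_hasDerivAt' t
    have hA := (((hT.pow 2).const_add 1).mul hH).add (hT.mul ((hH.pow 2).const_sub 1))
    refine hA.congr_deriv (Eq.symm ?_)
    simp only [Pi.pow_apply]
    push_cast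
    ring
  rw [h1, h2, hg.deriv, hy, hg_def]
  simp only
  ring
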